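/- (Trajectory factorization underlying the decentralized E-step.) In a finite Dec-POMDP with hierarchical agent models, fix a horizon h ≥ 0 and fix values ō = (ō^0,…,ō^h) of joint observations, ā = (ā^0,…,ā^h) of joint actions, and x̄ = (x̄^0,…,x̄^h) of joint subtasks, with the convention x̄_i^{-1} := #. Then the joint probability factorizes as P(o^{0:h} = ō, a^{0:h} = ā, x^{0:h} = x̄) = C(ō,ā) · ∏_{i=1}^n ∏_{t=0}^h [ Tx_i(x̄_i^t | ō_i^t, x̄_i^{t-1}) · π_i(ā_i^t | ō_i^t, x̄_i^t) ], where C(ō,ā) := ∑_{s^0,…,s^h ∈ S} μ0(s^0)·𝟙[O(s^0,#) = ō^0]·∏_{t=0}^{h-1} T(s^{t+1}|s^t,ā^t)·𝟙[O(s^{t+1},ā^t) = ō^{t+1}] depends only on the observation and action trajectories (here O(s,a) denotes the tuple (O_1(s,a),…,O_n(s,a))). Consequently, the conditional distribution of the subtask trajectories x^{0:h} given the observation-action trajectory (ō,ā) factorizes as a product over agents, each factor depending only on that agent's own observations, actions, and subtasks. -/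
import Mathlib


open scoped BigOperators
open Classical

section TrajectoryFactorization

variable {n : ℕ} {S : Type} {A : Fin n → Type} {Ω : Fin n → Type} {X : Fin n → Type}

/-- The previous joint subtask at time `t`: `#` (i.e. `none`) at `t = 0`, and
`xtr^{t-1}` otherwise. -/
noncomputable def prevJoint {h : ℕ} (xtr : Fin (h + 1) → ∀ i, X i) (t : Fin (h + 1))
    (i : Fin n) : Option (X i) :=
  Fin.cases none (fun k => some (xtr k.castSucc i)) t

/-- The previous (single-agent) subtask at time `t`: `#` (i.e. `none`) at `t = 0`, and
`ξ^{t-1}` otherwise. -/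
noncomputable def prevOne {Y : Type} {h : ℕ} (ξ : Fin (h + 1) → Y) (t : Fin (h + 1)) :
    Option Y :=
  Fin.cases none (fun k => some (ξ k.castSucc)) t

/-- The weight of a hidden-state sequence `s^{0:h}` compatible with the joint
observation trajectory `otr` and joint action trajectory `atr`:
`μ0(s⁰)·𝟙[O(s⁰,#) = otr⁰]·∏_{t<h} T(s^{t+1}|s^t,atr^t)·𝟙[O(s^{t+1},atr^t) = otr^{t+1}]`. -/
noncomputable def stateChainWeight [Fintype S]
    (T : S → (∀ i, A i) → S → ℝ) (μ0 : S → ℝ)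
    (Obs : ∀ i, S → Option (∀ j, A j) → Ω i) {h : ℕ}
    (otr : Fin (h + 1) → ∀ i, Ω i) (atr : Fin (h + 1) → ∀ i, A i)
    (s : Fin (h + 1) → S) : ℝ :=
  (μ0 (s 0) * (if ∀ i, otr 0 i = Obs i (s 0) none then (1 : ℝ) else 0)) *
    ∏ t : Fin h,
      (T (s t.castSucc) (atr t.castSucc) (s t.succ) *
        (if ∀ i, otr t.succ i = Obs i (s t.succ) (some (atr t.castSucc)) then (1 : ℝ) else 0))

/-- The joint probability `P(o^{0:h} = otr, a^{0:h} = atr, x^{0:h} = xtr)` of a full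
observation-action-subtask trajectory in the Dec-POMDP with hierarchical agent models,
obtained by summing the full path density over the hidden state sequences. -/
noncomputable def trajProb [Fintype S]
    (T : S → (∀ i, A i) → S → ℝ) (μ0 : S → ℝ)
    (Obs : ∀ i, S → Option (∀ j, A j) → Ω i)
    (π : ∀ i, Ω i → X i → A i → ℝ)
    (Tx : ∀ i, Ω i → Option (X i) → X i → ℝ) {h : ℕ}
    (otr : Fin (h + 1) → ∀ i, Ω i) (atr : Fin (h + 1) → ∀ i, A i)
    (xtr : Fin (h + 1) → ∀ i, X i) : ℝ :=
  ∑ s : Fin (h + 1) → S,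
    stateChainWeight T μ0 Obs otr atr s *
      ∏ t : Fin (h + 1), ∏ i : Fin n,
        (Tx i (otr t i) (prevJoint xtr t i) (xtr t i) * π i (otr t i) (xtr t i) (atr t i))

/-- The per-agent factor `∏_{t=0}^h Tx_i(ξ^t|otr_i^t, ξ^{t-1})·π_i(atr_i^t|otr_i^t, ξ^t)`
of agent `i`'s subtask trajectory `ξ`, given that agent's own observations and actions. -/
noncomputable def agentFactor
    (π : ∀ i, Ω i → X i → A i → ℝ)
    (Tx : ∀ i, Ω i → Option (X i) → X i → ℝ) {h : ℕ} (i : Fin n)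
    (otri : Fin (h + 1) → Ω i) (atri : Fin (h + 1) → A i)
    (ξ : Fin (h + 1) → X i) : ℝ :=
  ∏ t : Fin (h + 1), (Tx i (otri t) (prevOne ξ t) (ξ t) * π i (otri t) (ξ t) (atri t))

/-- **trajectory factorization underlying the decentralized E-step.**
For any horizon `h` and any joint trajectories `otr`, `atr`, `xtr`, the joint probability
factorizes as `P(o^{0:h}=otr, a^{0:h}=atr, x^{0:h}=xtr) = C(otr,atr) · ∏_i ∏_t
[Tx_i(xtr_i^t|otr_i^t, xtr_i^{t-1})·π_i(atr_i^t|otr_i^t, xtr_i^t)]`, where `C(otr,atr)` depends only on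
the observation and action trajectories. Consequently, whenever `P(otr,atr) > 0`, the
conditional distribution of the subtask trajectories given `(otr,atr)` factorizes as a
product over agents, each factor depending only on that agent's own observations,
actions, and subtasks. -/
theorem trajProb_factorization
    [Fintype S] [Nonempty S]
    [∀ i, Fintype (A i)] [∀ i, Nonempty (A i)]
    [∀ i, Fintype (Ω i)] [∀ i, Nonempty (Ω i)]
    [∀ i, Fintype (X i)] [∀ i, Nonempty (X i)]
    (T : S → (∀ i, A i) → S → ℝ) (μ0 : S → ℝ)
    (Obs : ∀ i, S → Option (∀ j, A j) → Ω i)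
    (π : ∀ i, Ω i → X i → A i → ℝ)
    (Tx : ∀ i, Ω i → Option (X i) → X i → ℝ)
    (hT_nonneg : ∀ s a s', 0 ≤ T s a s') (hT_sum : ∀ s a, ∑ s' : S, T s a s' = 1)
    (hμ0_nonneg : ∀ s, 0 ≤ μ0 s) (hμ0_sum : ∑ s : S, μ0 s = 1)
    (hπ_nonneg : ∀ i o x a, 0 ≤ π i o x a)
    (hπ_sum : ∀ i o x, ∑ a : A i, π i o x a = 1)
    (hTx_nonneg : ∀ i o xp x, 0 ≤ Tx i o xp x)
    (hTx_sum : ∀ i o xp, ∑ x : X i, Tx i o xp x = 1)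
    (h : ℕ) (otr : Fin (h + 1) → ∀ i, Ω i) (atr : Fin (h + 1) → ∀ i, A i) :
    (∀ xtr : Fin (h + 1) → ∀ i, X i,
      trajProb T μ0 Obs π Tx otr atr xtr
        = (∑ s : Fin (h + 1) → S, stateChainWeight T μ0 Obs otr atr s) *
            ∏ i : Fin n,
              agentFactor π Tx i (fun t => otr t i) (fun t => atr t i) (fun t => xtr t i)) ∧
    ((0 < ∑ xtr : Fin (h + 1) → ∀ i, X i, trajProb T μ0 Obs π Tx otr atr xtr) →
      ∀ xtr : Fin (h + 1) → ∀ i, X i,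
        trajProb T μ0 Obs π Tx otr atr xtr /
            (∑ xtr' : Fin (h + 1) → ∀ i, X i, trajProb T μ0 Obs π Tx otr atr xtr')
          = ∏ i : Fin n,
              (agentFactor π Tx i (fun t => otr t i) (fun t => atr t i) (fun t => xtr t i) /
                ∑ ξ : Fin (h + 1) → X i,
                  agentFactor π Tx i (fun t => otr t i) (fun t => atr t i) ξ)) := by
  classical
  have hprev : ∀ (xtr : Fin (h+1) → ∀ i, X i) (t : Fin (h+1)) (i : Fin n),
      prevJoint xtr t i = prevOne (fun t => xtr t i) t := by
    intro xtr t i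
    refine Fin.cases rfl (fun k => rfl) t
  have h1 : ∀ xtr : Fin (h + 1) → ∀ i, X i, trajProb T μ0 Obs π Tx otr atr xtr
      = (∑ s : Fin (h + 1) → S, stateChainWeight T μ0 Obs otr atr s) *
          ∏ i : Fin n,
            agentFactor π Tx i (fun t => otr t i) (fun t => atr t i) (fun t => xtr t i) := by
    intro xtr
    unfold trajProb
    rw [← Finset.sum_mul]
    congr 1
    rw [Finset.prod_comm]
    refine Finset.prod_congr rfl fun i _ => ?_
    refine Finset.prod_congr rfl fun t _ => ?_
    rw [hprev]
  refine ⟨h1, ?_⟩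
  intro hpos xtr
  set C := ∑ s : Fin (h + 1) → S, stateChainWeight T μ0 Obs otr atr s with hCdef
  set F : Fin n → ℝ := fun i =>
    ∑ ξ : Fin (h + 1) → X i, agentFactor π Tx i (fun t => otr t i) (fun t => atr t i) ξ
    with hFdef
  have htotal : (∑ xtr' : Fin (h + 1) → ∀ i, X i, trajProb T μ0 Obs π Tx otr atr xtr')
      = C * ∏ i : Fin n, F i := by
    simp_rw [h1]
    rw [← Finset.mul_sum]
    congr 1
    rw [show (∏ i : Fin n, F i)
        = ∑ p ∈ Fintype.piFinset (fun i : Fin n => (Finset.univ : Finset (Fin (h+1) → X i))),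
            ∏ i : Fin n, agentFactor π Tx i (fun t => otr t i) (fun t => atr t i) (p i)
      from Finset.prod_univ_sum _ _]
    rw [Fintype.piFinset_univ]
    exact Fintype.sum_equiv (Equiv.piComm fun t i => X i) _ _ (fun xtr' => rfl)
  have hwnn : ∀ s : Fin (h + 1) → S, 0 ≤ stateChainWeight T μ0 Obs otr atr s := by
    intro s
    unfold stateChainWeight
    apply mul_nonneg
    · apply mul_nonneg (hμ0_nonneg _); split_ifs <;> norm_num
    · apply Finset.prod_nonneg; intro t _
      apply mul_nonneg (hT_nonneg _ _ _); split_ifs <;> norm_num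
  have hfnn : ∀ (i : Fin n) (ξ : Fin (h+1) → X i),
      0 ≤ agentFactor π Tx i (fun t => otr t i) (fun t => atr t i) ξ := fun i ξ =>
    Finset.prod_nonneg fun t _ => mul_nonneg (hTx_nonneg _ _ _ _) (hπ_nonneg _ _ _ _)
  have hCnn : 0 ≤ C := Finset.sum_nonneg fun s _ => hwnn s
  have hFnn : ∀ i, 0 ≤ F i := fun i => Finset.sum_nonneg fun ξ _ => hfnn i ξ
  have hmul : 0 < C * ∏ i : Fin n, F i := htotal ▸ hpos
  have hC0 : C ≠ 0 := by
    intro h0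
    rw [h0, zero_mul] at hmul
    exact lt_irrefl 0 hmul
  rw [h1 xtr, htotal, mul_div_mul_left _ _ hC0, ← Finset.prod_div_distrib]


end TrajectoryFactorization
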